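/- Let L ≥ 1, let μ_1, ..., μ_L be pairwise distinct real numbers and t_1, ..., t_L be pairwise distinct real numbers. Then the L × L real matrix V with entries V(i, j) = exp(−μ_i · t_j) is invertible, i.e., det V ≠ 0. -/

import Mathlib

set_option autoImplicit false

open Real Finset in
/-- A nonzero exponential sum with `L` distinct exponents cannot vanish at `L`
strictly increasing points. -/
lemma exp_sum_zero_key : ∀ (L : ℕ) (μ c p : Fin L → ℝ), Function.Injective μ →
    StrictMono p → (∀ k, ∑ i, c i * Real.exp (μ i * p k) = 0) → c = 0 := by
  intro L
  induction L with
  | zero => intro μ c p _ _ _; funext i; exact i.elim0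
  | succ L ih =>
    intro μ c p hμ hp hz
    -- the auxiliary function obtained by dividing by `exp (μ 0 * x)`
    set g : ℝ → ℝ := fun x => ∑ i, c i * Real.exp ((μ i - μ 0) * x) with hgdef
    have hgz : ∀ k, g (p k) = 0 := by
      intro k
      have h0 := hz k
      have : g (p k) = (∑ i, c i * Real.exp (μ i * p k)) / Real.exp (μ 0 * p k) := by
        rw [Finset.sum_div]
        refine Finset.sum_congr rfl fun i _ => ?_
        rw [sub_mul, Real.exp_sub, mul_div_assoc]
      rw [this, h0, zero_div]
    -- derivative of g
    set D : ℝ → ℝ := fun x => ∑ i, c i * (Real.exp ((μ i - μ 0) * x) * ((μ i - μ 0) * 1))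
      with hDdef
    have hderiv : ∀ x, HasDerivAt g (D x) x := by
      intro x
      apply HasDerivAt.fun_sum
      intro i _
      exact (((hasDerivAt_id x).const_mul (μ i - μ 0)).exp).const_mul (c i)
    -- Rolle points between consecutive zeros
    have H : ∀ k : Fin L, ∃ x, x ∈ Set.Ioo (p k.castSucc) (p k.succ) ∧ D x = 0 := by
      intro k
      have hlt : p k.castSucc < p k.succ := hp Fin.castSucc_lt_succ
      obtain ⟨x, hx, hDx⟩ := exists_hasDerivAt_eq_zero hlt
        (fun x _ => (hderiv x).continuousAt.continuousWithinAt)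
        (by rw [hgz, hgz]) (fun x _ => hderiv x)
      exact ⟨x, hx, hDx⟩
    choose q hq hD0 using H
    have hqmono : StrictMono q := by
      intro a b hab
      have h1 : q a < p a.succ := (hq a).2
      have h2 : p a.succ ≤ p b.castSucc := by
        apply hp.monotone
        simp only [Fin.le_def, Fin.val_succ, Fin.coe_castSucc]
        exact hab
      exact lt_of_lt_of_le (lt_of_lt_of_le h1 h2) (le_of_lt (hq b).1)
    -- rewrite D (q k) = 0 as an exponential sum with L exponents
    set ν : Fin L → ℝ := fun i => μ i.succ - μ 0 with hνdef
    set d : Fin L → ℝ := fun i => c i.succ * (μ i.succ - μ 0) with hddef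
    have hνinj : Function.Injective ν := by
      intro a b h
      have : μ a.succ = μ b.succ := by
        have := sub_left_injective h
        linarith [sub_left_inj.mp h]
      exact Fin.succ_injective _ (hμ this)
    have hdz : ∀ k, ∑ i, d i * Real.exp (ν i * q k) = 0 := by
      intro k
      have h0 : ∑ i : Fin (L + 1),
          c i * (Real.exp ((μ i - μ 0) * q k) * ((μ i - μ 0) * 1)) = 0 := hD0 k
      rw [Fin.sum_univ_succ] at h0
      simp only [sub_self, zero_mul, mul_one, mul_zero, zero_add] at h0
      rw [← h0]
      refine Finset.sum_congr rfl fun i _ => ?_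
      ring
    have hd := ih ν d q hνinj hqmono hdz
    have hcsucc : ∀ i : Fin L, c i.succ = 0 := by
      intro i
      have hdi : d i = 0 := by rw [hd]; rfl
      rw [hddef] at hdi
      rcases mul_eq_zero.mp hdi with h | h
      · exact h
      · exfalso
        have : μ i.succ = μ 0 := by linarith [sub_eq_zero.mp h]
        exact (Fin.succ_ne_zero i) (hμ this)
    have hc0 : c 0 = 0 := by
      have h0 := hz 0
      rw [Fin.sum_univ_succ] at h0
      have hrest : ∑ i : Fin L, c i.succ * Real.exp (μ i.succ * p 0) = 0 := by
        refine Finset.sum_eq_zero fun i _ => ?_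
        rw [hcsucc i, zero_mul]
      rw [hrest, add_zero] at h0
      exact (mul_eq_zero.mp h0).resolve_right (Real.exp_ne_zero _)
    funext i
    refine Fin.cases ?_ ?_ i
    · exact hc0
    · exact hcsucc

/-- The exponential Vandermonde matrix `V(i,j) = exp(−μ_i · t_j)` with pairwise distinct
`μ_i` and pairwise distinct `t_j` is invertible, i.e. `det V ≠ 0`. -/
theorem exp_vandermonde_det_ne_zero (L : ℕ) (hL : 1 ≤ L) (μ t : Fin L → ℝ)
    (hμ : Function.Injective μ) (ht : Function.Injective t) :
    (Matrix.of fun i j : Fin L => Real.exp (-μ i * t j)).det ≠ 0 := by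
  intro hdet
  obtain ⟨v, hv, hv0⟩ := Matrix.exists_vecMul_eq_zero_iff.mpr hdet
  -- for every column j, the exponential sum vanishes at t j
  have hcol : ∀ j : Fin L, ∑ i, v i * Real.exp (-μ i * t j) = 0 := by
    intro j
    have := congrFun hv0 j
    simpa [Matrix.vecMul, dotProduct] using this
  -- sort the points t j
  set s : Finset ℝ := Finset.image t Finset.univ with hsdef
  have hcard : s.card = L := by
    rw [hsdef, Finset.card_image_of_injective _ ht, Finset.card_univ, Fintype.card_fin]
  set e := s.orderIsoOfFin hcard with hedef
  set p : Fin L → ℝ := fun k => (e k : ℝ) with hpdef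
  have hpmono : StrictMono p := by
    intro a b hab
    exact e.strictMono hab
  have hzero : ∀ k, ∑ i, v i * Real.exp ((-μ i) * p k) = 0 := by
    intro k
    have hmem : p k ∈ s := (e k).2
    rw [hsdef] at hmem
    obtain ⟨j, _, hj⟩ := Finset.mem_image.mp hmem
    rw [← hj]
    exact hcol j
  have hμinj : Function.Injective (fun i => -μ i) := by
    intro a b h
    exact hμ (neg_injective h)
  have := exp_sum_zero_key L (fun i => -μ i) v p hμinj hpmono hzero
  exact hv this
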